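/- Let Q be a set of quartets over n labels that is incompatible while every proper subset of Q is compatible, and let r = n - 2. Then the set C_Q of r-state characters corresponding to Q has cardinality |Q|, is incompatible, and every proper subset of C_Q is compatible. -/

import Mathlib

open SimpleGraph

universe u

/-- A quartet `xy|zw`: an unordered pair of unordered pairs of labels. -/
def quartet {L : Type u} (x y z w : L) : Sym2 (Sym2 L) := s(s(x, y), s(z, w))

/-- `q` is a genuine quartet: four pairwise distinct labels. -/
def IsQuartet {L : Type u} (q : Sym2 (Sym2 L)) : Prop :=
  ∃ x y z w : L, x ≠ y ∧ x ≠ z ∧ x ≠ w ∧ y ≠ z ∧ y ≠ w ∧ z ≠ w ∧ q = quartet x y z w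

/-- The label set `L(Q)` of a set of quartets. -/
def qLabelSet {L : Type u} (Q : Set (Sym2 (Sym2 L))) : Set L :=
  {x | ∃ q ∈ Q, ∃ p, p ∈ q ∧ x ∈ p}

/-- An unrooted phylogenetic tree whose leaves are in bijection with the label set `S`:
a finite tree with no degree-2 vertex, whose degree-1 vertices are exactly the labeled ones. -/
structure UTree (L : Type u) (S : Set L) where
  V : Type
  fV : Fintype V
  G : SimpleGraph V
  isTree : G.IsTree
  label : S → V
  labelInj : Function.Injective label
  leafIff : ∀ v : V, (∃ l : S, label l = v) ↔ (G.neighborSet v).ncard = 1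
  noDeg2 : ∀ v : V, (G.neighborSet v).ncard ≠ 2

/-- `T` displays the quartet `xy|zw`: the path between the leaves labeled `x` and `y`
is vertex-disjoint from the path between the leaves labeled `z` and `w`. -/
def UTree.displays4 {L : Type u} {S : Set L} (T : UTree L S) (x y z w : L) : Prop :=
  ∃ (hx : x ∈ S) (hy : y ∈ S) (hz : z ∈ S) (hw : w ∈ S)
    (p : T.G.Walk (T.label ⟨x, hx⟩) (T.label ⟨y, hy⟩))
    (p' : T.G.Walk (T.label ⟨z, hz⟩) (T.label ⟨w, hw⟩)),
    p.IsPath ∧ p'.IsPath ∧ ∀ v, v ∈ p.support → v ∉ p'.support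

def UTree.displays {L : Type u} {S : Set L} (T : UTree L S) (q : Sym2 (Sym2 L)) : Prop :=
  ∀ x y z w : L, q = quartet x y z w → T.displays4 x y z w

/-- A set of quartets is compatible over label set `S` if a single tree displays all of them. -/
def QCompat {L : Type u} (S : Set L) (Q : Set (Sym2 (Sym2 L))) : Prop :=
  ∃ T : UTree L S, ∀ q ∈ Q, T.displays q

/-- `χ` is a partition of the label set `S` (a character on `S`). -/
def IsPartitionOn {L : Type u} (S : Set L) (χ : Set (Set L)) : Prop :=
  (∀ B ∈ χ, B.Nonempty ∧ B ⊆ S) ∧ ∀ x ∈ S, ∃! B, B ∈ χ ∧ x ∈ B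

/-- The vertex set of the minimal subtree of `T` spanning the leaves labeled by `B`. -/
def UTree.span {L : Type u} {S : Set L} (T : UTree L S) (B : Set L) : Set T.V :=
  {v | ∃ (x y : L) (hx : x ∈ S) (hy : y ∈ S), x ∈ B ∧ y ∈ B ∧
    ∃ p : T.G.Walk (T.label ⟨x, hx⟩) (T.label ⟨y, hy⟩), p.IsPath ∧ v ∈ p.support}

/-- The character `χ` is convex on `T`: spanning subtrees of distinct blocks are disjoint. -/
def UTree.convexOn {L : Type u} {S : Set L} (T : UTree L S) (χ : Set (Set L)) : Prop :=
  ∀ B ∈ χ, ∀ B' ∈ χ, B ≠ B' → ∀ v ∈ T.span B, v ∉ T.span B'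

/-- A set of characters is compatible over `S` if a single tree makes all of them convex. -/
def CCompat {L : Type u} (S : Set L) (C : Set (Set (Set L))) : Prop :=
  ∃ T : UTree L S, ∀ χ ∈ C, T.convexOn χ

/-- The character `χ_q` corresponding to the quartet `xy|zw`:
blocks `{x,y}`, `{z,w}` and a singleton for every other label of `S`. -/
def chiQ {L : Type u} (S : Set L) (x y z w : L) : Set (Set L) :=
  {{x, y}, {z, w}} ∪ {B | ∃ l ∈ S, l ≠ x ∧ l ≠ y ∧ l ≠ z ∧ l ≠ w ∧ B = {l}}

/-- The set of characters corresponding to a set of quartets. -/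
def CQ {L : Type u} (S : Set L) (Q : Set (Sym2 (Sym2 L))) : Set (Set (Set L)) :=
  {χ | ∃ q ∈ Q, ∃ x y z w : L, q = quartet x y z w ∧ χ = chiQ S x y z w}

/-- A rooted phylogenetic tree on label set `S`. -/
structure RTree (L : Type u) (S : Set L) where
  V : Type
  fV : Fintype V
  G : SimpleGraph V
  isTree : G.IsTree
  root : V
  label : S → V
  labelInj : Function.Injective label
  leafIff : ∀ v : V, (∃ l : S, label l = v) ↔ ((G.neighborSet v).ncard = 1 ∧ v ≠ root)
  noDeg2 : ∀ v : V, v ≠ root → (G.neighborSet v).ncard ≠ 2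

/-- `u` is an ancestor of `v`: `u` lies on the path from the root to `v`. -/
def RTree.anc {L : Type u} {S : Set L} (T : RTree L S) (u v : T.V) : Prop :=
  ∃ p : T.G.Walk T.root v, p.IsPath ∧ u ∈ p.support

/-- `m` is the most recent common ancestor of the set `A` of vertices. -/
def RTree.isMRCA {L : Type u} {S : Set L} (T : RTree L S) (A : Set T.V) (m : T.V) : Prop :=
  (∀ v ∈ A, T.anc m v) ∧ ∀ w, (∀ v ∈ A, T.anc w v) → T.anc w m

/-- `T` displays the rooted triplet `ab|c`: the MRCA of `{a,b}` is a proper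
descendant of the MRCA of `{a,b,c}`. -/
def RTree.displays3 {L : Type u} {S : Set L} (T : RTree L S) (a b c : L) : Prop :=
  ∃ (ha : a ∈ S) (hb : b ∈ S) (hc : c ∈ S) (m M : T.V),
    T.isMRCA {T.label ⟨a, ha⟩, T.label ⟨b, hb⟩} m ∧
    T.isMRCA {T.label ⟨a, ha⟩, T.label ⟨b, hb⟩, T.label ⟨c, hc⟩} M ∧
    T.anc M m ∧ M ≠ m

/-- A rooted triplet `ab|c` is encoded as the pair `(s(a,b), c)`. -/
def RTree.displays {L : Type u} {S : Set L} (T : RTree L S) (t : Sym2 L × L) : Prop :=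
  ∀ a b c : L, t = (s(a, b), c) → T.displays3 a b c

def IsTriplet {L : Type u} (t : Sym2 L × L) : Prop :=
  ∃ a b c : L, a ≠ b ∧ a ≠ c ∧ b ≠ c ∧ t = (s(a, b), c)

/-- The label set `L(R)` of a set of rooted triplets. -/
def tLabelSet {L : Type u} (R : Set (Sym2 L × L)) : Set L :=
  {x | ∃ t ∈ R, x ∈ t.1 ∨ x = t.2}

/-- A set of rooted triplets is compatible if one rooted tree displays all of them. -/
def RCompat {L : Type u} (S : Set L) (R : Set (Sym2 L × L)) : Prop :=
  ∃ T : RTree L S, ∀ t ∈ R, T.displays t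

/-- The graph `[R,S]`: vertices `S`, with an edge `{a,b}` whenever `ab|c ∈ R` for some `c ∈ S`. -/
def tripGraph {L : Type u} (R : Set (Sym2 L × L)) (S : Set L) : SimpleGraph L where
  Adj x y := x ≠ y ∧ x ∈ S ∧ y ∈ S ∧ ∃ c ∈ S, (s(x, y), c) ∈ R
  symm := ⟨by
    rintro x y ⟨hxy, hx, hy, c, hc, hR⟩
    exact ⟨hxy.symm, hy, hx, c, hc, by rwa [Sym2.eq_swap]⟩⟩
  loopless := ⟨by rintro x ⟨hx, -⟩; exact hx rfl⟩

/-- The label set `L_{s,t} = {a_1,…,a_s, b_1,…,b_t}`, with `a_i = inl i` and `b_j = inr j`. -/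
def Lst (s t : ℕ) : Set (ℕ ⊕ ℕ) := (Sum.inl '' Set.Icc 1 s) ∪ (Sum.inr '' Set.Icc 1 t)

/-- The quartet set `Q_{s,t} = {a_1b_1|a_sb_t} ∪ {a_i a_{i+1} | b_j b_{j+1} : 1 ≤ i < s, 1 ≤ j < t}`. -/
def Qst (s t : ℕ) : Finset (Sym2 (Sym2 (ℕ ⊕ ℕ))) :=
  insert (quartet (Sum.inl 1) (Sum.inr 1) (Sum.inl s) (Sum.inr t))
    ((Finset.Ico 1 s ×ˢ Finset.Ico 1 t).image
      (fun p => quartet (Sum.inl p.1) (Sum.inl (p.1 + 1)) (Sum.inr p.2) (Sum.inr (p.2 + 1))))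


/-! ### Auxiliary lemmas -/

section Aux

variable {L : Type u}

/-- A representation-independent description of `chiQ`. -/
def chiOf (S : Set L) (q : Sym2 (Sym2 L)) : Set (Set L) :=
  {B | (∃ u v : L, s(u, v) ∈ q ∧ B = {u, v}) ∨ ∃ l ∈ S, (∀ p ∈ q, l ∉ p) ∧ B = {l}}

lemma chiOf_quartet (S : Set L) (x y z w : L) :
    chiOf S (quartet x y z w) = chiQ S x y z w := by
  ext B
  simp only [chiOf, chiQ, quartet, Set.mem_setOf_eq, Set.mem_union, Set.mem_insert_iff,
    Set.mem_singleton_iff, Sym2.mem_iff, Sym2.eq_iff]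
  constructor
  · rintro (⟨u, v, (⟨rfl, rfl⟩ | ⟨rfl, rfl⟩) | (⟨rfl, rfl⟩ | ⟨rfl, rfl⟩), rfl⟩ | ⟨l, hl, hno, rfl⟩)
    · exact Or.inl (Or.inl rfl)
    · exact Or.inl (Or.inl (Set.pair_comm _ _))
    · exact Or.inl (Or.inr rfl)
    · exact Or.inl (Or.inr (Set.pair_comm _ _))
    · have h1 := hno s(x, y) (Or.inl rfl)
      have h2 := hno s(z, w) (Or.inr rfl)
      rw [Sym2.mem_iff] at h1 h2
      push_neg at h1 h2
      exact Or.inr ⟨l, hl, h1.1, h1.2, h2.1, h2.2, rfl⟩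
  · rintro ((rfl | rfl) | ⟨l, hl, h1, h2, h3, h4, rfl⟩)
    · exact Or.inl ⟨x, y, Or.inl (Or.inl ⟨rfl, rfl⟩), rfl⟩
    · exact Or.inl ⟨z, w, Or.inr (Or.inl ⟨rfl, rfl⟩), rfl⟩
    · refine Or.inr ⟨l, hl, ?_, rfl⟩
      rintro p (rfl | rfl) <;> rw [Sym2.mem_iff] <;> push_neg <;> exact ⟨‹_›, ‹_›⟩

lemma quartet_perm {x y z w a b c d : L} (h : quartet x y z w = quartet a b c d) :
    (s(x, y) = s(a, b) ∧ s(z, w) = s(c, d)) ∨ (s(x, y) = s(c, d) ∧ s(z, w) = s(a, b)) :=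
  Sym2.eq_iff.mp h

lemma quartet_eq_distinct {x y z w a b c d : L}
    (h6 : x ≠ y ∧ x ≠ z ∧ x ≠ w ∧ y ≠ z ∧ y ≠ w ∧ z ≠ w)
    (h : quartet x y z w = quartet a b c d) :
    a ≠ b ∧ a ≠ c ∧ a ≠ d ∧ b ≠ c ∧ b ≠ d ∧ c ≠ d := by
  obtain ⟨hx, hy, hz, hw, hv, hu⟩ := h6
  obtain ⟨h1, h2⟩ | ⟨h1, h2⟩ := quartet_perm h <;> rw [Sym2.eq_iff] at h1 h2 <;>
    obtain ⟨h3, h4⟩ | ⟨h3, h4⟩ := h1 <;> obtain ⟨h5, h6⟩ | ⟨h5, h6⟩ := h2 <;>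
    subst_vars <;> tauto

lemma quartet_mem_labels {Q : Set (Sym2 (Sym2 L))} {q : Sym2 (Sym2 L)} (hq : q ∈ Q)
    {x y z w : L} (h : q = quartet x y z w) :
    x ∈ qLabelSet Q ∧ y ∈ qLabelSet Q ∧ z ∈ qLabelSet Q ∧ w ∈ qLabelSet Q := by
  have hm1 : s(x, y) ∈ q := by rw [h]; exact Sym2.mem_mk_left _ _
  have hm2 : s(z, w) ∈ q := by rw [h]; exact Sym2.mem_mk_right _ _
  exact ⟨⟨q, hq, s(x, y), hm1, Sym2.mem_mk_left _ _⟩,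
    ⟨q, hq, s(x, y), hm1, Sym2.mem_mk_right _ _⟩,
    ⟨q, hq, s(z, w), hm2, Sym2.mem_mk_left _ _⟩,
    ⟨q, hq, s(z, w), hm2, Sym2.mem_mk_right _ _⟩⟩

lemma pair_ne_pair {x y z w : L}
    (h6 : x ≠ y ∧ x ≠ z ∧ x ≠ w ∧ y ≠ z ∧ y ≠ w ∧ z ≠ w) :
    ({x, y} : Set L) ≠ {z, w} := by
  intro h
  rcases Set.pair_eq_pair_iff.mp h with ⟨h1, h2⟩ | ⟨h1, h2⟩
  · exact h6.2.1 h1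
  · exact h6.2.2.1 h1

lemma chiQ_inj {S : Set L} {x y z w a b c d : L}
    (h6 : x ≠ y ∧ x ≠ z ∧ x ≠ w ∧ y ≠ z ∧ y ≠ w ∧ z ≠ w)
    (h6' : a ≠ b ∧ a ≠ c ∧ a ≠ d ∧ b ≠ c ∧ b ≠ d ∧ c ≠ d)
    (h : chiQ S x y z w = chiQ S a b c d) :
    quartet x y z w = quartet a b c d := by
  have hxy : ({x, y} : Set L) ∈ chiQ S a b c d := by
    rw [← h]; exact Or.inl (Or.inl rfl)
  have hzw : ({z, w} : Set L) ∈ chiQ S a b c d := by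
    rw [← h]; exact Or.inl (Or.inr rfl)
  have hsing : ∀ (u v l : L), u ≠ v → ({u, v} : Set L) ≠ {l} := by
    intro u v l huv he
    have hu : u ∈ ({l} : Set L) := he ▸ Set.mem_insert u {v}
    have hv : v ∈ ({l} : Set L) := he ▸ Set.mem_insert_of_mem u rfl
    rw [Set.mem_singleton_iff] at hu hv
    exact huv (hu.trans hv.symm)
  have hxy' : ({x, y} : Set L) = {a, b} ∨ ({x, y} : Set L) = {c, d} := by
    rcases hxy with (h' | h') | ⟨l, _, _, _, _, _, h'⟩
    · exact Or.inl h'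
    · exact Or.inr h'
    · exact absurd h' (hsing x y l h6.1)
  have hzw' : ({z, w} : Set L) = {a, b} ∨ ({z, w} : Set L) = {c, d} := by
    rcases hzw with (h' | h') | ⟨l, _, _, _, _, _, h'⟩
    · exact Or.inl h'
    · exact Or.inr h'
    · exact absurd h' (hsing z w l h6.2.2.2.2.2)
  have key : ∀ u v a' b' : L, ({u, v} : Set L) = {a', b'} → s(u, v) = s(a', b') := by
    intro u v a' b' h'
    rcases Set.pair_eq_pair_iff.mp h' with ⟨h1, h2⟩ | ⟨h1, h2⟩
    · exact Sym2.eq_iff.mpr (Or.inl ⟨h1, h2⟩)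
    · exact Sym2.eq_iff.mpr (Or.inr ⟨h1, h2⟩)
  rcases hxy' with h1 | h1 <;> rcases hzw' with h2 | h2
  · exact absurd (h1.trans h2.symm) (pair_ne_pair h6)
  · exact Sym2.eq_iff.mpr (Or.inl ⟨key _ _ _ _ h1, key _ _ _ _ h2⟩)
  · exact Sym2.eq_iff.mpr (Or.inr ⟨key _ _ _ _ h1, key _ _ _ _ h2⟩)
  · exact absurd (h1.trans h2.symm) (pair_ne_pair h6)

lemma chiQ_card {S : Set L} (hS : S.Finite) {x y z w : L}
    (hx : x ∈ S) (hy : y ∈ S) (hz : z ∈ S) (hw : w ∈ S)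
    (h6 : x ≠ y ∧ x ≠ z ∧ x ≠ w ∧ y ≠ z ∧ y ≠ w ∧ z ≠ w) :
    (chiQ S x y z w).ncard ≤ S.ncard - 2 := by
  classical
  obtain ⟨hxy, hxz, hxw, hyz, hyw, hzw⟩ := h6
  set f : L → Set L := fun l => if l = x then {x, y} else if l = z then {z, w} else {l} with hf
  have hsub : chiQ S x y z w ⊆ f '' (S \ {y, w}) := by
    rintro B ((rfl | rfl) | ⟨l, hl, h1, h2, h3, h4, rfl⟩)
    · exact ⟨x, ⟨hx, by simp [hxy, hxw]⟩, by simp [hf]⟩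
    · exact ⟨z, ⟨hz, by simp [hyz.symm, hzw]⟩, by simp [hf, hxz.symm]⟩
    · exact ⟨l, ⟨hl, by simp [h2, h4]⟩, by simp [hf, h1, h3]⟩
  have hfin' : (S \ {y, w}).Finite := hS.diff
  calc (chiQ S x y z w).ncard ≤ (f '' (S \ {y, w})).ncard :=
        Set.ncard_le_ncard hsub (hfin'.image f)
    _ ≤ (S \ {y, w}).ncard := Set.ncard_image_le hfin'
    _ = S.ncard - 2 := by
        rw [Set.ncard_diff (by rw [Set.pair_subset_iff]; exact ⟨hy, hw⟩) (by simp),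
          Set.ncard_pair hyw]

/-- A leaf can only occur at the ends of a path. -/
lemma leaf_of_mem_support {V : Type} {G : SimpleGraph V} {u v c : V}
    (hleaf : (G.neighborSet c).ncard = 1) {p : G.Walk u v}
    (hp : p.IsPath) (hc : c ∈ p.support) : c = u ∨ c = v := by
  classical
  by_cases h1 : c = u
  · exact Or.inl h1
  by_cases h2 : c = v
  · exact Or.inr h2
  exfalso
  obtain ⟨q, r, rfl⟩ := SimpleGraph.Walk.mem_support_iff_exists_append.mp hc
  have aux : ∀ {d : V} (wk : G.Walk c d), c ≠ d → ∃ b, G.Adj c b ∧ b ∈ wk.support.tail := by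
    intro d wk hne
    cases wk with
    | nil => exact absurd rfl hne
    | cons hadj wk' => exact ⟨_, hadj, by simpa using wk'.start_mem_support⟩
  obtain ⟨b1, ha1, hb1⟩ := aux q.reverse h1
  obtain ⟨b2, ha2, hb2⟩ := aux r h2
  have hb1' : b1 ∈ q.support := by
    have := List.mem_of_mem_tail hb1
    rwa [SimpleGraph.Walk.support_reverse, List.mem_reverse] at this
  have hbb : b1 = b2 := by
    obtain ⟨a, ha⟩ := Set.ncard_eq_one.mp hleaf
    have e1 : b1 ∈ G.neighborSet c := ha1
    have e2 : b2 ∈ G.neighborSet c := ha2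
    rw [ha, Set.mem_singleton_iff] at e1 e2
    rw [e1, e2]
  have hnd := hp.support_nodup
  rw [SimpleGraph.Walk.support_append, List.nodup_append] at hnd
  exact hnd.2.2 b1 hb1' b1 (hbb ▸ hb2) rfl

variable {S : Set L}

lemma span_pair_subset (T : UTree L S) {a b : L} (ha : a ∈ S) (hb : b ∈ S)
    {p : T.G.Walk (T.label ⟨a, ha⟩) (T.label ⟨b, hb⟩)} (hp : p.IsPath) :
    T.span {a, b} ⊆ {v | v ∈ p.support} := by
  rintro v ⟨x', y', hx', hy', hxB, hyB, q, hq, hv⟩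
  have huniq := T.isTree.existsUnique_path (T.label ⟨a, ha⟩) (T.label ⟨b, hb⟩)
  rcases hxB with (rfl | rfl) <;> rcases hyB with (rfl | rfl)
  · rw [SimpleGraph.Walk.isPath_iff_eq_nil.mp hq] at hv
    simp only [SimpleGraph.Walk.support_nil, List.mem_singleton] at hv
    rw [hv]; exact p.start_mem_support
  · have : q = p := huniq.unique hq hp
    rw [this] at hv; exact hv
  · have : q.reverse = p := huniq.unique hq.reverse hp
    show v ∈ p.support
    rw [← this, SimpleGraph.Walk.support_reverse]
    exact List.mem_reverse.mpr hv
  · rw [SimpleGraph.Walk.isPath_iff_eq_nil.mp hq] at hv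
    simp only [SimpleGraph.Walk.support_nil, List.mem_singleton] at hv
    rw [hv]; exact p.end_mem_support

lemma span_singleton_subset (T : UTree L S) {l : L} (hl : l ∈ S) :
    T.span {l} ⊆ {T.label ⟨l, hl⟩} := by
  rintro v ⟨x', y', hx', hy', rfl, hyB, q, hq, hv⟩
  rcases hyB with rfl
  rw [SimpleGraph.Walk.isPath_iff_eq_nil.mp hq] at hv
  simpa using hv

lemma label_is_leaf (T : UTree L S) {l : L} (hl : l ∈ S) :
    (T.G.neighborSet (T.label ⟨l, hl⟩)).ncard = 1 :=
  (T.leafIff _).mp ⟨⟨l, hl⟩, rfl⟩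

lemma convexOn_chiQ_displays4 (T : UTree L S) {x y z w : L}
    (hx : x ∈ S) (hy : y ∈ S) (hz : z ∈ S) (hw : w ∈ S)
    (h6 : x ≠ y ∧ x ≠ z ∧ x ≠ w ∧ y ≠ z ∧ y ≠ w ∧ z ≠ w)
    (hc : T.convexOn (chiQ S x y z w)) : T.displays4 x y z w := by
  obtain ⟨p, hp, -⟩ := T.isTree.existsUnique_path (T.label ⟨x, hx⟩) (T.label ⟨y, hy⟩)
  obtain ⟨p', hp', -⟩ := T.isTree.existsUnique_path (T.label ⟨z, hz⟩) (T.label ⟨w, hw⟩)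
  refine ⟨hx, hy, hz, hw, p, p', hp, hp', ?_⟩
  intro v hv hv'
  exact hc {x, y} (Or.inl (Or.inl rfl)) {z, w} (Or.inl (Or.inr rfl)) (pair_ne_pair h6) v
    ⟨x, y, hx, hy, by simp, by simp, p, hp, hv⟩
    ⟨z, w, hz, hw, by simp, by simp, p', hp', hv'⟩

lemma displays4_convexOn (T : UTree L S) {x y z w : L}
    (h6 : x ≠ y ∧ x ≠ z ∧ x ≠ w ∧ y ≠ z ∧ y ≠ w ∧ z ≠ w)
    (hd : T.displays4 x y z w) : T.convexOn (chiQ S x y z w) := by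
  obtain ⟨hx, hy, hz, hw, p, p', hp, hp', hdisj⟩ := hd
  have hPxy := span_pair_subset T hx hy hp
  have hPzw := span_pair_subset T hz hw hp'
  have hnot : ∀ (l : L) (hl : l ∈ S), l ≠ x → l ≠ y → T.label ⟨l, hl⟩ ∉ p.support := by
    intro l hl h1 h2 hmem
    rcases leaf_of_mem_support (label_is_leaf T hl) hp hmem with h | h
    · exact h1 (Subtype.ext_iff.mp (T.labelInj h))
    · exact h2 (Subtype.ext_iff.mp (T.labelInj h))
  have hnot' : ∀ (l : L) (hl : l ∈ S), l ≠ z → l ≠ w → T.label ⟨l, hl⟩ ∉ p'.support := by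
    intro l hl h1 h2 hmem
    rcases leaf_of_mem_support (label_is_leaf T hl) hp' hmem with h | h
    · exact h1 (Subtype.ext_iff.mp (T.labelInj h))
    · exact h2 (Subtype.ext_iff.mp (T.labelInj h))
  rintro B hB B' hB' hne v hvB hvB'
  rcases hB with (rfl | rfl) | ⟨l, hl, h1, h2, h3, h4, rfl⟩ <;>
    rcases hB' with (rfl | rfl) | ⟨l', hl', h1', h2', h3', h4', rfl⟩
  · exact hne rfl
  · exact hdisj v (hPxy hvB) (hPzw hvB')
  · have := span_singleton_subset T hl' hvB'
    rw [Set.mem_singleton_iff] at this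
    exact hnot l' hl' h1' h2' (this ▸ hPxy hvB)
  · exact hdisj v (hPxy hvB') (hPzw hvB)
  · exact hne rfl
  · have := span_singleton_subset T hl' hvB'
    rw [Set.mem_singleton_iff] at this
    exact hnot' l' hl' h3' h4' (this ▸ hPzw hvB)
  · have := span_singleton_subset T hl hvB
    rw [Set.mem_singleton_iff] at this
    exact hnot l hl h1 h2 (this ▸ hPxy hvB')
  · have := span_singleton_subset T hl hvB
    rw [Set.mem_singleton_iff] at this
    exact hnot' l hl h3 h4 (this ▸ hPzw hvB')
  · have e1 := span_singleton_subset T hl hvB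
    have e2 := span_singleton_subset T hl' hvB'
    rw [Set.mem_singleton_iff] at e1 e2
    have : l = l' := Subtype.ext_iff.mp (T.labelInj (e1.symm.trans e2))
    exact hne (by rw [this])

lemma CQ_eq_image {Q : Set (Sym2 (Sym2 L))} (hQ : ∀ q ∈ Q, IsQuartet q) (S : Set L) :
    CQ S Q = chiOf S '' Q := by
  ext χ
  constructor
  · rintro ⟨q, hq, x, y, z, w, hrep, rfl⟩
    exact ⟨q, hq, by rw [hrep, chiOf_quartet]⟩
  · rintro ⟨q, hq, rfl⟩
    obtain ⟨x, y, z, w, _, _, _, _, _, _, hrep⟩ := hQ q hq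
    exact ⟨q, hq, x, y, z, w, hrep, by rw [hrep, chiOf_quartet]⟩

end Aux

/-- if `Q` over n labels is incompatible with all proper subsets compatible,
then `C_Q` consists of `|Q|` many (n-2)-state characters, is incompatible, and every
proper subset of `C_Q` is compatible. -/
theorem CQ_minimal_incompatible (n : ℕ) (Q : Set (Sym2 (Sym2 ℕ))) (hfin : Q.Finite)
    (hQ : ∀ q ∈ Q, IsQuartet q) (hLfin : (qLabelSet Q).Finite)
    (hn : (qLabelSet Q).ncard = n)
    (hinc : ¬ QCompat (qLabelSet Q) Q)
    (hsub : ∀ Q', Q' ⊂ Q → QCompat (qLabelSet Q) Q') :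
    (CQ (qLabelSet Q) Q).ncard = Q.ncard ∧
    (∀ χ ∈ CQ (qLabelSet Q) Q, χ.ncard ≤ n - 2) ∧
    ¬ CCompat (qLabelSet Q) (CQ (qLabelSet Q) Q) ∧
    (∀ C', C' ⊂ CQ (qLabelSet Q) Q → CCompat (qLabelSet Q) C') := by
  set S := qLabelSet Q with hS
  have himg : CQ S Q = chiOf S '' Q := CQ_eq_image hQ S
  have hinj : Set.InjOn (chiOf S) Q := by
    intro q1 h1 q2 h2 he
    obtain ⟨x, y, z, w, d1, d2, d3, d4, d5, d6, hr1⟩ := hQ q1 h1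
    obtain ⟨a, b, c, d, e1, e2, e3, e4, e5, e6, hr2⟩ := hQ q2 h2
    rw [hr1, chiOf_quartet, hr2, chiOf_quartet] at he
    rw [hr1, hr2]
    exact chiQ_inj ⟨d1, d2, d3, d4, d5, d6⟩ ⟨e1, e2, e3, e4, e5, e6⟩ he
  refine ⟨?_, ?_, ?_, ?_⟩
  · rw [himg, Set.ncard_image_of_injOn hinj]
  · rintro χ ⟨q, hq, x, y, z, w, hrep, rfl⟩
    obtain ⟨a, b, c, d, e1, e2, e3, e4, e5, e6, hrep2⟩ := hQ q hq
    have hchieq : chiQ S x y z w = chiQ S a b c d := by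
      rw [← chiOf_quartet, ← chiOf_quartet, ← hrep, ← hrep2]
    obtain ⟨ha, hb, hc, hd⟩ := quartet_mem_labels hq hrep2
    rw [hchieq, ← hn]
    exact chiQ_card hLfin ha hb hc hd ⟨e1, e2, e3, e4, e5, e6⟩
  · rintro ⟨T, hT⟩
    apply hinc
    refine ⟨T, fun q hq => ?_⟩
    intro a b c d hrep
    obtain ⟨x, y, z, w, d1, d2, d3, d4, d5, d6, hrep0⟩ := hQ q hq
    have h6 := quartet_eq_distinct ⟨d1, d2, d3, d4, d5, d6⟩ (hrep0.symm.trans hrep)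
    obtain ⟨ha, hb, hc, hd⟩ := quartet_mem_labels hq hrep
    have hmem : chiQ S a b c d ∈ CQ S Q := ⟨q, hq, a, b, c, d, hrep, rfl⟩
    exact convexOn_chiQ_displays4 T ha hb hc hd h6 (hT _ hmem)
  · intro C' hC'
    set Q' : Set (Sym2 (Sym2 ℕ)) := {q | q ∈ Q ∧ chiOf S q ∈ C'} with hQ'
    have hQ'sub : Q' ⊆ Q := fun q hq => hq.1
    obtain ⟨χ0, hχ0, hχ0n⟩ := Set.exists_of_ssubset hC'
    obtain ⟨q0, hq0, rfl⟩ := himg ▸ hχ0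
    have hproper : Q' ⊂ Q := by
      refine (Set.ssubset_iff_of_subset hQ'sub).mpr ⟨q0, hq0, fun h => hχ0n h.2⟩
    obtain ⟨T, hT⟩ := hsub Q' hproper
    refine ⟨T, ?_⟩
    intro χ hχ
    obtain ⟨q, hq, rfl⟩ := himg ▸ hC'.subset hχ
    obtain ⟨x, y, z, w, d1, d2, d3, d4, d5, d6, hrep⟩ := hQ q hq
    have hq' : q ∈ Q' := ⟨hq, hχ⟩
    obtain ⟨hx, hy, hz, hw⟩ := quartet_mem_labels hq hrep
    have hd4 : T.displays4 x y z w := hT q hq' x y z w hrep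
    rw [hrep, chiOf_quartet]
    exact displays4_convexOn T ⟨d1, d2, d3, d4, d5, d6⟩ hd4
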